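/- Let F be a complex Banach space, let K and K_N (N ∈ ℕ) be bounded linear operators on F with K_N f → K f as N → ∞ for every f ∈ F. Let c ∈ ℂ, r > 0, and suppose the circle S = {z ∈ ℂ : |z − c| = r} is contained in ρ(K), and that there exist N₀ ∈ ℕ and M < ∞ such that for all N > N₀ and all z ∈ S, z ∈ ρ(K_N) and ‖R(z, K_N)‖ ≤ M. Define the Riesz integrals P = (2πi)⁻¹ ∮_{|z−c|=r} R(z, K) dz and, for N > N₀, P_N = (2πi)⁻¹ ∮_{|z−c|=r} R(z, K_N) dz. Then for every f ∈ F, P_N f → P f as N → ∞. -/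

import Mathlib

open Filter Metric

/-- The Riesz spectral projection `(2πi)⁻¹ ∮_{|z-c|=r} R(z, A) dz`. -/
noncomputable def rieszProjection {F : Type*} [NormedAddCommGroup F]
    [NormedSpace ℂ F] (A : F →L[ℂ] F) (c : ℂ) (r : ℝ) : F →L[ℂ] F :=
  (2 * (Real.pi : ℂ) * Complex.I)⁻¹ • (∮ z in C(c, r), resolvent A z)

/-- Second resolvent identity for two different elements. -/
lemma resolvent_sub_resolvent' {A : Type*} [Ring A] [Algebra ℂ A] (a b : A) {z : ℂ}
    (ha : z ∈ resolventSet ℂ a) (hb : z ∈ resolventSet ℂ b) :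
    resolvent a z - resolvent b z = resolvent a z * (a - b) * resolvent b z := by
  have h1 : a - b = ((IsUnit.unit hb : Aˣ) : A) - ((IsUnit.unit ha : Aˣ) : A) := by
    rw [IsUnit.unit_spec hb, IsUnit.unit_spec ha]; abel
  rw [spectrum.resolvent_eq ha, spectrum.resolvent_eq hb, h1,
    mul_sub, sub_mul, mul_assoc, Units.mul_inv, mul_one, Units.inv_mul, one_mul]

/-- Pointwise convergence of approximate Riesz spectral projections: if
`K_N f → K f` pointwise, the circle `{|z - c| = r}` lies in `ρ(K)`, and the
resolvents of the `K_N` exist and are uniformly bounded on that circle for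
`N > N₀`, then `P_N f → P f` for every `f`, where `P`, `P_N` are the Riesz
integrals of the resolvents of `K`, `K_N` over the circle. -/
theorem riesz_projection_pointwise_convergence {F : Type*} [NormedAddCommGroup F]
    [NormedSpace ℂ F] [CompleteSpace F]
    (K : F →L[ℂ] F) (Kn : ℕ → F →L[ℂ] F)
    (hconv : ∀ f : F, Tendsto (fun N => Kn N f) atTop (nhds (K f)))
    (c : ℂ) (r : ℝ) (hr : 0 < r)
    (hS : sphere c r ⊆ resolventSet ℂ K)
    (N₀ : ℕ) (M : ℝ)
    (hstab : ∀ N > N₀, ∀ z ∈ sphere c r,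
      z ∈ resolventSet ℂ (Kn N) ∧ ‖resolvent (Kn N) z‖ ≤ M) :
    ∀ f : F, Tendsto (fun N => rieszProjection (Kn N) c r f) atTop
      (nhds (rieszProjection K c r f)) := by
  intro f
  have hz0 : circleMap c r 0 ∈ sphere c r := circleMap_mem_sphere c hr.le 0
  have hM0 : 0 ≤ M :=
    le_trans (norm_nonneg _) ((hstab (N₀ + 1) (Nat.lt_succ_self N₀) _ hz0).2)
  -- continuity of the operator-valued integrand
  have hcontOp : ∀ (A : F →L[ℂ] F), (∀ z ∈ sphere c r, z ∈ resolventSet ℂ A) →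
      Continuous (fun θ : ℝ => deriv (circleMap c r) θ • resolvent A (circleMap c r θ)) := by
    intro A hA
    have hres : Continuous fun θ : ℝ => resolvent A (circleMap c r θ) := by
      rw [continuous_iff_continuousAt]
      intro θ
      exact (spectrum.hasDerivAt_resolvent
        (hA _ (circleMap_mem_sphere c hr.le θ))).continuousAt.comp
        (continuous_circleMap c r).continuousAt
    have hder : Continuous fun θ : ℝ => deriv (circleMap c r) θ := by
      simp only [deriv_circleMap]
      exact (continuous_circleMap 0 r).mul continuous_const
    exact hder.smul hres
  -- the Riesz projection applied to `f` as an interval integral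
  have happly : ∀ (A : F →L[ℂ] F), (∀ z ∈ sphere c r, z ∈ resolventSet ℂ A) →
      rieszProjection A c r f
        = (2 * (Real.pi : ℂ) * Complex.I)⁻¹ • ∫ θ in (0:ℝ)..(2 * Real.pi),
            deriv (circleMap c r) θ • resolvent A (circleMap c r θ) f := by
    intro A hA
    have hint : IntervalIntegrable
        (fun θ : ℝ => deriv (circleMap c r) θ • resolvent A (circleMap c r θ))
        MeasureTheory.volume 0 (2 * Real.pi) :=
      (hcontOp A hA).intervalIntegrable _ _
    simp only [rieszProjection, ContinuousLinearMap.smul_apply, circleIntegral]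
    rw [ContinuousLinearMap.intervalIntegral_apply hint f]
    simp only [ContinuousLinearMap.smul_apply]
  -- pointwise convergence of the resolvents applied to `f`
  have key : ∀ z ∈ sphere c r,
      Tendsto (fun N => resolvent (Kn N) z f) atTop (nhds (resolvent K z f)) := by
    intro z hz
    set g : F := resolvent K z f with hg
    rw [← tendsto_sub_nhds_zero_iff]
    have hgc := hconv g
    rw [← tendsto_sub_nhds_zero_iff, tendsto_zero_iff_norm_tendsto_zero] at hgc
    have hbound : Tendsto (fun N => M * ‖Kn N g - K g‖) atTop (nhds 0) := by
      simpa using hgc.const_mul M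
    refine squeeze_zero_norm' ?_ hbound
    filter_upwards [eventually_gt_atTop N₀] with N hN
    obtain ⟨hzN, hMN⟩ := hstab N hN z hz
    have hid := resolvent_sub_resolvent' (Kn N) K hzN (hS hz)
    have hid' : resolvent (Kn N) z f - resolvent K z f
        = resolvent (Kn N) z (Kn N g - K g) := by
      have := congrArg (fun T : F →L[ℂ] F => T f) hid
      simpa [ContinuousLinearMap.sub_apply, ContinuousLinearMap.mul_apply, hg] using this
    rw [hid']
    calc ‖resolvent (Kn N) z (Kn N g - K g)‖
        ≤ ‖resolvent (Kn N) z‖ * ‖Kn N g - K g‖ := ContinuousLinearMap.le_opNorm _ _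
      _ ≤ M * ‖Kn N g - K g‖ := mul_le_mul_of_nonneg_right hMN (norm_nonneg _)
  -- dominated convergence for the interval integrals
  have hmain : Tendsto
      (fun N => (2 * (Real.pi : ℂ) * Complex.I)⁻¹ • ∫ θ in (0:ℝ)..(2 * Real.pi),
        deriv (circleMap c r) θ • resolvent (Kn N) (circleMap c r θ) f) atTop
      (nhds ((2 * (Real.pi : ℂ) * Complex.I)⁻¹ • ∫ θ in (0:ℝ)..(2 * Real.pi),
        deriv (circleMap c r) θ • resolvent K (circleMap c r θ) f)) := by
    apply Tendsto.const_smul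
    apply intervalIntegral.tendsto_integral_filter_of_dominated_convergence
      (bound := fun _ => r * (M * ‖f‖))
    · filter_upwards [eventually_gt_atTop N₀] with N hN
      exact (((hcontOp (Kn N) (fun z hz => (hstab N hN z hz).1)).clm_apply
        continuous_const).aestronglyMeasurable)
    · filter_upwards [eventually_gt_atTop N₀] with N hN
      filter_upwards with θ _
      rw [norm_smul]
      have h1 : ‖deriv (circleMap c r) θ‖ = r := by
        simp [deriv_circleMap, abs_of_pos hr]
      rw [h1]
      refine mul_le_mul_of_nonneg_left ?_ hr.le
      obtain ⟨hzN, hMN⟩ := hstab N hN _ (circleMap_mem_sphere c hr.le θ)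
      calc ‖resolvent (Kn N) (circleMap c r θ) f‖
          ≤ ‖resolvent (Kn N) (circleMap c r θ)‖ * ‖f‖ := ContinuousLinearMap.le_opNorm _ _
        _ ≤ M * ‖f‖ := mul_le_mul_of_nonneg_right hMN (norm_nonneg _)
    · exact intervalIntegrable_const
    · filter_upwards with θ _
      exact (key _ (circleMap_mem_sphere c hr.le θ)).const_smul _
  rw [happly K (fun z hz => hS hz)]
  refine hmain.congr' ?_
  filter_upwards [eventually_gt_atTop N₀] with N hN
  exact (happly (Kn N) (fun z hz => (hstab N hN z hz).1)).symm
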